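/- Let k be a field of prime characteristic p, U a k-vector space, and φ : U → U a linear map with φ^p = 0. With φ_d : Sym(U) → Sym(U) defined by φ_d(x_1 ⋯ x_n) = ∑_{|K| = d} (∏_{j∉K} x_j)·(∏_{j∈K} φ(x_j)), each φ_d with d ≥ 1 satisfies φ_d^p = 0. -/

import Mathlib

open Finset in
lemma orbit_sum_zero {α M : Type*} [DecidableEq α] [AddCommMonoid M]
    {p : ℕ} (hp : p.Prime) (σ : Equiv.Perm α) (hσ : σ ^ p = 1)
    (f : α → M) (hM : ∀ m : M, p • m = 0)
    (s : Finset α) (hmap : ∀ a ∈ s, σ a ∈ s)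
    (hfree : ∀ a ∈ s, σ a ≠ a)
    (hf : ∀ a ∈ s, f (σ a) = f a) :
    ∑ a ∈ s, f a = 0 := by
  have hadd : ∀ (i j : ℕ) (b : α), (σ ^ i) ((σ ^ j) b) = (σ ^ (i + j)) b := by
    intro i j b; rw [← Equiv.Perm.mul_apply, ← pow_add]
  have hmod : ∀ k : ℕ, σ ^ k = σ ^ (k % p) := by
    intro k
    conv_lhs => rw [← Nat.div_add_mod k p]
    rw [pow_add, pow_mul, hσ, one_pow, one_mul]
  induction s using Finset.strongInduction with
  | _ s ih =>
    rcases s.eq_empty_or_nonempty with rfl | ⟨a, ha⟩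
    · simp
    have hin : ∀ m, (σ ^ m) a ∈ s := by
      intro m; induction m with
      | zero => simpa using ha
      | succ m ihm =>
        rw [pow_succ', Equiv.Perm.mul_apply]
        exact hmap _ ihm
    have hfa : ∀ m, f ((σ ^ m) a) = f a := by
      intro m; induction m with
      | zero => simp
      | succ m ihm =>
        rw [pow_succ', Equiv.Perm.mul_apply, hf _ (hin m)]; exact ihm
    have hkey : ∀ m, m < p → (σ ^ m) a = a → m = 0 := by
      intro m hmp hma
      by_contra hm0
      have hco : Nat.Coprime m p :=
        Nat.coprime_comm.mp (hp.coprime_iff_not_dvd.mpr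
          (fun h => absurd (Nat.le_of_dvd (Nat.pos_of_ne_zero hm0) h) (not_le.mpr hmp)))
      obtain ⟨u, -, hu⟩ := Nat.exists_mul_mod_eq_one_of_coprime hco hp.one_lt
      have h1 : ∀ t, (σ ^ (m * t)) a = a := by
        intro t; induction t with
        | zero => simp
        | succ t iht =>
          rw [Nat.mul_succ, add_comm, ← hadd, iht]
          exact hma
      have h2 : σ a = a := by
        have := h1 u
        rwa [hmod (m * u), hu, pow_one] at this
      exact hfree a ha h2
    have haux : ∀ i j, i < p → j < p → i ≤ j → (σ ^ i) a = (σ ^ j) a → i = j := by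
      intro i j hi hj hle hij
      have h3 : (σ ^ (j - i)) a = a := by
        have e1 : (σ ^ (p - i)) ((σ ^ i) a) = a := by
          rw [hadd, Nat.sub_add_cancel (le_of_lt hi), hmod p, Nat.mod_self, pow_zero,
            Equiv.Perm.one_apply]
        calc (σ ^ (j - i)) a = (σ ^ (j - i)) ((σ ^ (p - i)) ((σ ^ i) a)) := by rw [e1]
          _ = (σ ^ (j - i + (p - i))) ((σ ^ i) a) := by rw [hadd]
          _ = (σ ^ (p - i)) ((σ ^ (j - i + i)) a) := by
              have he : j - i + (p - i) + i = p - i + (j - i + i) := by omega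
              rw [hadd, hadd, he]
          _ = (σ ^ (p - i)) ((σ ^ j) a) := by rw [Nat.sub_add_cancel hle]
          _ = (σ ^ (p - i)) ((σ ^ i) a) := by rw [← hij]
          _ = a := e1
      have := hkey (j - i) (lt_of_le_of_lt (Nat.sub_le _ _) hj) h3
      omega
    have hinj : Set.InjOn (fun m => (σ ^ m) a) (Finset.range p : Finset ℕ) := by
      intro i hi j hj hij
      simp only [coe_range, Set.mem_Iio] at hi hj
      simp only at hij
      rcases le_total i j with hle | hle
      · exact haux i j hi hj hle hij
      · exact (haux j i hj hi hle hij.symm).symm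
    set O : Finset α := (Finset.range p).image (fun m => (σ ^ m) a) with hO
    have haO : a ∈ O := by
      refine Finset.mem_image.mpr ⟨0, Finset.mem_range.mpr hp.pos, by simp⟩
    have hOsub : O ⊆ s := by
      intro b hb
      obtain ⟨m, _, rfl⟩ := Finset.mem_image.mp hb
      exact hin m
    have hOcard : O.card = p := by
      rw [hO, Finset.card_image_of_injOn hinj, card_range]
    have hback : ∀ b, σ b ∈ O → b ∈ O := by
      intro b hb
      obtain ⟨m, hm, hbm⟩ := Finset.mem_image.mp hb
      have hb' : b = (σ ^ (p - 1 + m)) a := by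
        rw [← hadd, hbm, ← Equiv.Perm.mul_apply, ← pow_succ,
          Nat.sub_add_cancel hp.one_lt.le, hσ, Equiv.Perm.one_apply]
      rw [hb', hmod]
      exact Finset.mem_image.mpr ⟨_, Finset.mem_range.mpr (Nat.mod_lt _ hp.pos), rfl⟩
    have hsumO : ∑ b ∈ O, f b = 0 := by
      have : ∀ b ∈ O, f b = f a := by
        intro b hb
        obtain ⟨m, _, rfl⟩ := Finset.mem_image.mp hb
        exact hfa m
      rw [Finset.sum_congr rfl this, Finset.sum_const, hOcard, hM]
    have hsplit : ∑ b ∈ s \ O, f b + ∑ b ∈ O, f b = ∑ b ∈ s, f b :=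
      Finset.sum_sdiff hOsub
    have hss : s \ O ⊂ s := Finset.sdiff_ssubset hOsub ⟨a, haO⟩
    have hrest : ∑ b ∈ s \ O, f b = 0 := by
      refine ih _ hss ?_ ?_ ?_
      · intro b hb
        rcases Finset.mem_sdiff.mp hb with ⟨hbs, hbO⟩
        exact Finset.mem_sdiff.mpr ⟨hmap b hbs, fun h => hbO (hback b h)⟩
      · intro b hb; exact hfree b (Finset.mem_sdiff.mp hb).1
      · intro b hb; exact hf b (Finset.mem_sdiff.mp hb).1
    rw [← hsplit, hrest, hsumO, add_zero]


open Fin.NatCast Fin.CommRing in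
/-- Let `k` be a field of prime characteristic `p`, `U` a `k`-vector space and
`φ : U → U` with `φ^p = 0`.  On the symmetric algebra `Sym(U)` (modelled by a
commutative `k`-algebra `S` with `ι : U →ₗ[k] S` whose products of images span),
the maps `φ_d` defined by
`φ_d(x_1 ⋯ x_n) = ∑_{|K| = d} (∏_{j∉K} x_j)·(∏_{j∈K} φ(x_j))` satisfy
`φ_d^p = 0` for every `d ≥ 1`. -/
theorem troesch_stmt7 (k : Type*) [Field k] (p : ℕ) [Fact p.Prime] [CharP k p]
    (U : Type*) [AddCommGroup U] [Module k U]
    (φ : U →ₗ[k] U) (hφ : φ ^ p = 0)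
    (S : Type*) [CommRing S] [Algebra k S] (ι : U →ₗ[k] S)
    (hspan : Submodule.span k
      {s : S | ∃ (n : ℕ) (x : Fin n → U), s = ∏ i, ι (x i)} = ⊤)
    (Φ : ℕ → (S →ₗ[k] S))
    (hΦ : ∀ (d n : ℕ) (x : Fin n → U),
      Φ d (∏ i, ι (x i)) =
        ∑ K ∈ Finset.univ.powersetCard d,
          (∏ j ∈ Kᶜ, ι (x j)) * ∏ j ∈ K, ι (φ (x j))) :
    ∀ d : ℕ, 1 ≤ d → (Φ d : Module.End k S) ^ p = 0 := by
  intro d hd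
  have hp : p.Prime := Fact.out
  haveI : NeZero p := ⟨hp.pos.ne'⟩
  -- Step 1: iteration formula
  have key : ∀ (m n : ℕ) (x : Fin n → U),
      ((Φ d : Module.End k S) ^ m) (∏ i, ι (x i)) =
        ∑ K : Fin m → {A : Finset (Fin n) // A.card = d},
          ∏ j, ι ((φ ^ (∑ i, if j ∈ (K i : Finset (Fin n)) then 1 else 0)) (x j)) := by
    intro m
    induction m with
    | zero =>
      intro n x
      simp
    | succ m ihm =>
      intro n x
      rw [pow_succ, Module.End.mul_apply, hΦ d n x]
      have h1 : ∀ L ∈ (Finset.univ : Finset (Fin n)).powersetCard d,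
          (∏ j ∈ Lᶜ, ι (x j)) * ∏ j ∈ L, ι (φ (x j)) =
            ∏ j, ι (if j ∈ L then φ (x j) else x j) := by
        intro L _
        rw [← Finset.prod_mul_prod_compl L (fun j => ι (if j ∈ L then φ (x j) else x j)),
          mul_comm]
        congr 1
        · exact Finset.prod_congr rfl fun j hj => by rw [if_pos hj]
        · exact Finset.prod_congr rfl fun j hj => by rw [if_neg (Finset.mem_compl.mp hj)]
      rw [Finset.sum_congr rfl h1, map_sum]
      have h2 : ∀ L ∈ (Finset.univ : Finset (Fin n)).powersetCard d,
          ((Φ d : Module.End k S) ^ m) (∏ j, ι (if j ∈ L then φ (x j) else x j)) =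
            ∑ K : Fin m → {A : Finset (Fin n) // A.card = d},
              ∏ j, ι ((φ ^ ((if j ∈ L then 1 else 0) +
                ∑ i, if j ∈ (K i : Finset (Fin n)) then 1 else 0)) (x j)) := by
        intro L _
        rw [ihm n (fun j => if j ∈ L then φ (x j) else x j)]
        refine Finset.sum_congr rfl fun K _ => Finset.prod_congr rfl fun j _ => ?_
        congr 1
        split_ifs with h
        · rw [add_comm, pow_succ, Module.End.mul_apply]
        · rw [zero_add]
      rw [Finset.sum_congr rfl h2]
      rw [Finset.sum_subtype ((Finset.univ : Finset (Fin n)).powersetCard d)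
        (fun A => Finset.mem_powersetCard_univ) (fun L => ∑ K : Fin m → {A : Finset (Fin n) // A.card = d},
              ∏ j, ι ((φ ^ ((if j ∈ L then 1 else 0) +
                ∑ i, if j ∈ (K i : Finset (Fin n)) then 1 else 0)) (x j)))]
      have e1 : (∑ K : Fin (m + 1) → {A : Finset (Fin n) // A.card = d},
            ∏ j, ι ((φ ^ (∑ i, if j ∈ (K i : Finset (Fin n)) then 1 else 0)) (x j)))
          = ∑ q : {A : Finset (Fin n) // A.card = d} ×
              (Fin m → {A : Finset (Fin n) // A.card = d}),
            ∏ j, ι ((φ ^ ((if j ∈ (q.1 : Finset (Fin n)) then 1 else 0) +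
              ∑ i, if j ∈ (q.2 i : Finset (Fin n)) then 1 else 0)) (x j)) := by
        refine Fintype.sum_equiv (Fin.consEquiv fun _ => {A : Finset (Fin n) // A.card = d}).symm _ _ fun K' => ?_
        simp only [Fin.consEquiv_symm_apply]
        refine Finset.prod_congr rfl fun j _ => ?_
        congr 2
        rw [Fin.sum_univ_succ]
        rfl
      rw [e1, Fintype.sum_prod_type]
  -- Step 2: p • _ = 0 in S
  have hM : ∀ m : S, p • m = 0 := by
    intro m
    rw [← Nat.cast_smul_eq_nsmul k, CharP.cast_eq_zero, zero_smul]
  -- Step 3: vanishing on products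
  have hvanish : ∀ (n : ℕ) (x : Fin n → U),
      ((Φ d : Module.End k S) ^ p) (∏ i, ι (x i)) = 0 := by
    intro n x
    rw [key p n x]
    set β := {A : Finset (Fin n) // A.card = d} with hβ
    set f : (Fin p → β) → S := fun K =>
      ∏ j, ι ((φ ^ (∑ i, if j ∈ (K i : Finset (Fin n)) then 1 else 0)) (x j)) with hf
    set σ : Equiv.Perm (Fin p → β) :=
      Equiv.arrowCongr (Equiv.addLeft (1 : Fin p)) (Equiv.refl β) with hσdef
    have hσapp : ∀ K i, σ K i = K (-1 + i) := by
      intro K i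
      simp [hσdef, Equiv.arrowCongr]
    have hσpow : ∀ (t : ℕ) K i, ((σ ^ t) K) i = K (-(t : Fin p) + i) := by
      intro t
      induction t with
      | zero => intro K i; simp
      | succ t iht =>
        intro K i
        rw [pow_succ, Equiv.Perm.mul_apply, iht, hσapp]
        congr 1
        push_cast
        ring
    have hσp : σ ^ p = 1 := by
      ext K i
      rw [hσpow p K i]
      simp [Fin.natCast_self]
    have hconst : ∀ K : Fin p → β, σ K = K → ∀ i, K i = K 0 := by
      intro K hK i
      have hKt : ∀ t : ℕ, (σ ^ t) K = K := by
        intro t; induction t with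
        | zero => simp
        | succ t iht => rw [pow_succ, Equiv.Perm.mul_apply, hK, iht]
      have h := hσpow i.val K i
      rw [hKt] at h
      have h0 : (-(i.val : Fin p) + i) = 0 := by
        rw [Fin.cast_val_eq_self]; exact neg_add_cancel i
      rw [h0] at h
      exact h
    rw [← Finset.sum_filter_add_sum_filter_not Finset.univ (fun K => σ K = K) f]
    have hfix : ∀ K ∈ Finset.univ.filter (fun K => σ K = K), f K = 0 := by
      intro K hK
      have hKc := hconst K (Finset.mem_filter.mp hK).2
      have hne : ((K 0 : Finset (Fin n))).Nonempty :=
        Finset.card_pos.mp (by rw [(K 0).2]; omega)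
      obtain ⟨j, hj⟩ := hne
      refine Finset.prod_eq_zero (Finset.mem_univ j) ?_
      have hexp : (∑ i, if j ∈ (K i : Finset (Fin n)) then 1 else 0) = p := by
        have h1 : ∀ i : Fin p, (if j ∈ (K i : Finset (Fin n)) then 1 else 0) = 1 := by
          intro i; rw [hKc i]; exact if_pos hj
        rw [Finset.sum_congr rfl (fun i _ => h1 i), Finset.sum_const, Finset.card_univ,
          Fintype.card_fin, smul_eq_mul, mul_one]
      rw [hexp, hφ, LinearMap.zero_apply, map_zero]
    rw [Finset.sum_eq_zero hfix, zero_add]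
    refine orbit_sum_zero hp σ hσp f hM _ ?_ ?_ ?_
    · intro K hK
      simp only [Finset.mem_filter, Finset.mem_univ, true_and] at hK ⊢
      intro h; exact hK (σ.injective h)
    · intro K hK
      simp only [Finset.mem_filter, Finset.mem_univ, true_and] at hK
      exact hK
    · intro K hK
      simp only [hf]
      refine Finset.prod_congr rfl fun j _ => ?_
      have hsum : (∑ i, if j ∈ ((σ K) i : Finset (Fin n)) then 1 else 0)
          = ∑ i, if j ∈ (K i : Finset (Fin n)) then 1 else 0 := by
        rw [Finset.sum_congr rfl (fun i _ => by rw [hσapp])]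
        exact Equiv.sum_comp (Equiv.addLeft (-1 : Fin p))
          (fun i => if j ∈ (K i : Finset (Fin n)) then 1 else 0)
      rw [hsum]
  -- Step 4: conclude by spanning
  refine LinearMap.ext fun s => ?_
  rw [LinearMap.zero_apply]
  have hs : s ∈ Submodule.span k {s : S | ∃ (n : ℕ) (x : Fin n → U), s = ∏ i, ι (x i)} := by
    rw [hspan]; exact Submodule.mem_top
  refine Submodule.span_induction
    (p := fun y _ => ((Φ d : Module.End k S) ^ p) y = 0) ?_ ?_ ?_ ?_ hs
  · rintro y ⟨n, x, rfl⟩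
    exact hvanish n x
  · exact map_zero _
  · intro a b _ _ ha hb
    rw [map_add, ha, hb, add_zero]
  · intro r a _ ha
    rw [map_smul, ha, smul_zero]
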